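/- Let z ∈ 𝕊 have infinite order. Then there exists a sequence (a_n) of positive integers such that for every v ∈ 𝕊, one has v^{a_n} → 1 as n → ∞ if and only if v belongs to the cyclic subgroup ⟨z⟩ generated by z. -/

import Mathlib

open Filter Topology

noncomputable section

namespace CharSeq

/-- distance to the nearest integer -/
def nn (x : ℝ) : ℝ := |x - round x|

lemma nn_nonneg (x : ℝ) : 0 ≤ nn x := abs_nonneg _

lemma nn_le_abs (x : ℝ) : nn x ≤ |x| := by
  simpa [nn] using round_le x 0

lemma nn_add_int (x : ℝ) (k : ℤ) : nn (x + k) = nn x := by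
  unfold nn
  rw [round_add_intCast]
  push_cast
  ring_nf

lemma nn_eq_abs {x : ℝ} (h : |x| < 1/2) : nn x = |x| := by
  have hx := abs_lt.1 h
  have : round x = 0 := by
    rw [round_eq, Int.floor_eq_zero_iff]
    constructor <;> linarith [hx.1, hx.2]
  simp [nn, this]

/-- block index machinery. `A` is the (positive) length of each block. -/
def idx (A : ℕ → ℕ) : ℕ → ℕ × ℕ
  | 0 => (0, 1)
  | m + 1 =>
    let p := idx A m
    if p.2 < A p.1 then (p.1, p.2 + 1) else (p.1 + 1, 1)

variable {A : ℕ → ℕ} (hA : ∀ n, 1 ≤ A n)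

include hA in
lemma idx_j_bounds : ∀ m, 1 ≤ (idx A m).2 ∧ (idx A m).2 ≤ A (idx A m).1 := by
  intro m
  induction m with
  | zero => exact ⟨le_refl _, hA 0⟩
  | succ k ih =>
    rw [idx]
    by_cases h : (idx A k).2 < A (idx A k).1
    · simp only [h, if_pos]
      exact ⟨by omega, by omega⟩
    · simp only [h, if_neg, if_false]
      exact ⟨le_refl _, hA _⟩

lemma idx_fst_le_succ (m : ℕ) : (idx A m).1 ≤ (idx A (m+1)).1 := by
  rw [idx]
  by_cases h : (idx A m).2 < A (idx A m).1 <;> simp [h]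

lemma idx_fst_mono : Monotone fun m => (idx A m).1 :=
  monotone_nat_of_le_succ fun m => idx_fst_le_succ m

include hA in
lemma idx_reach_one : ∀ n, ∃ m, idx A m = (n, 1) := by
  intro n
  induction n with
  | zero => exact ⟨0, rfl⟩
  | succ k ih =>
    obtain ⟨m, hm⟩ := ih
    have key : ∀ j, j + 1 ≤ A k → idx A (m + j) = (k, j + 1) := by
      intro j
      induction j with
      | zero => intro _; simpa using hm
      | succ i ihj =>
        intro hij
        have h1 : idx A (m + i) = (k, i + 1) := ihj (by omega)
        have : m + (i+1) = (m + i) + 1 := by omega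
        rw [this, idx, h1]
        simp only []
        rw [if_pos]
        exact hij
    have hlast : idx A (m + (A k - 1)) = (k, A k) := by
      have h1 := hA k
      have := key (A k - 1) (by omega)
      rwa [Nat.sub_add_cancel h1] at this
    refine ⟨m + (A k - 1) + 1, ?_⟩
    rw [idx, hlast]
    simp

include hA in
lemma idx_reach : ∀ n j, 1 ≤ j → j ≤ A n → ∃ m, idx A m = (n, j) := by
  intro n j h1 h2
  obtain ⟨m, hm⟩ := idx_reach_one hA n
  have key : ∀ i, i + 1 ≤ A n → idx A (m + i) = (n, i + 1) := by
    intro i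
    induction i with
    | zero => intro _; simpa using hm
    | succ i ihj =>
      intro hij
      have h1 : idx A (m + i) = (n, i + 1) := ihj (by omega)
      have : m + (i+1) = (m + i) + 1 := by omega
      rw [this, idx, h1]
      simp only []
      rw [if_pos]
      exact hij
  refine ⟨m + (j - 1), ?_⟩
  have := key (j-1) (by omega)
  rwa [Nat.sub_add_cancel h1] at this

include hA in
lemma idx_fst_tendsto : Tendsto (fun m => (idx A m).1) atTop atTop := by
  apply tendsto_atTop_atTop_of_monotone idx_fst_mono
  intro n
  obtain ⟨m, hm⟩ := idx_reach_one hA n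
  exact ⟨m, by rw [hm]⟩

lemma idx_late {M m : ℕ} (h : (idx A M).1 < (idx A m).1) : M ≤ m := by
  by_contra hc
  have : (idx A m).1 ≤ (idx A M).1 := idx_fst_mono (le_of_lt (not_le.1 hc))
  omega

end CharSeq
namespace CharSeq

variable (α : ℝ)

/-- θ of a pair (p, q): q*α - p -/
def th' (pq : ℤ × ℤ) : ℝ := pq.2 * α - pq.1

/-- continued fraction coefficient from two pairs -/
def bcoef (s t : ℤ × ℤ) : ℤ := ⌊|th' α s| / |th' α t|⌋

/-- state n = (pair n, pair (n+1)) where pair n = (P n, Q n) -/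
def state : ℕ → (ℤ × ℤ) × (ℤ × ℤ)
  | 0 => ((1, 0), (⌊α⌋, 1))
  | n + 1 =>
    let s := state n
    let B := bcoef α s.1 s.2
    (s.2, (B * s.2.1 + s.1.1, B * s.2.2 + s.1.2))

def P (n : ℕ) : ℤ := (state α n).1.1
def Q (n : ℕ) : ℤ := (state α n).1.2
def th (n : ℕ) : ℝ := Q α n * α - P α n
def B (n : ℕ) : ℤ := bcoef α (state α n).1 (state α n).2

lemma P_succ (n : ℕ) : P α (n+1) = (state α n).2.1 := by rw [P, state]
lemma Q_succ (n : ℕ) : Q α (n+1) = (state α n).2.2 := by rw [Q, state]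

lemma P_rec (n : ℕ) : P α (n+2) = B α n * P α (n+1) + P α n := by
  have h : P α (n+2) = bcoef α (state α n).1 (state α n).2 * (state α n).2.1 + (state α n).1.1 := rfl
  rw [h, ← B, ← P_succ]; rfl
lemma Q_rec (n : ℕ) : Q α (n+2) = B α n * Q α (n+1) + Q α n := by
  have h : Q α (n+2) = bcoef α (state α n).1 (state α n).2 * (state α n).2.2 + (state α n).1.2 := rfl
  rw [h, ← B, ← Q_succ]; rfl

lemma B_eq (n : ℕ) : B α n = ⌊|th α n| / |th α (n+1)|⌋ := by
  have h1 : th α n = th' α (state α n).1 := by rw [th, th', P, Q]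
  have h2 : th α (n+1) = th' α (state α n).2 := by rw [th, th', P_succ, Q_succ]
  rw [B, bcoef, h1, h2]

lemma th_rec (n : ℕ) : th α (n+2) = B α n * th α (n+1) + th α n := by
  rw [th, th, th, P_rec, Q_rec]
  push_cast
  ring

lemma P0 : P α 0 = 1 := rfl
lemma Q0 : Q α 0 = 0 := rfl
lemma P1 : P α 1 = ⌊α⌋ := by rw [P_succ]; rfl
lemma Q1 : Q α 1 = 1 := by rw [Q_succ]; rfl
lemma th0 : th α 0 = -1 := by rw [th, P0, Q0]; push_cast; ring
lemma th1 : th α 1 = α - ⌊α⌋ := by rw [th, P1, Q1]; push_cast; ring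

variable {α} (hα : ∀ p q : ℤ, q ≠ 0 → (q : ℝ) * α ≠ p)

/-- the full invariant -/
def Inv (n : ℕ) : Prop :=
  th α n * th α (n+1) < 0 ∧ |th α (n+1)| < |th α n| ∧
    (P α (n+1) * Q α n - P α n * Q α (n+1))^2 = 1 ∧
    0 ≤ Q α n ∧ 1 ≤ Q α (n+1) ∧ Q α n ≤ Q α (n+1)

include hα in
lemma th_ne (n : ℕ) (h : 1 ≤ Q α n) : th α n ≠ 0 := by
  rw [th, sub_ne_zero]
  exact hα (P α n) (Q α n) (by omega)

include hα in
lemma inv_zero : Inv (α := α) 0 := by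
  have h1 : th α 1 ≠ 0 := th_ne hα 1 (by rw [Q1])
  have h2 : 0 ≤ th α 1 := by rw [th1]; simp [Int.floor_le]
  have h3 : th α 1 < 1 := by
    rw [th1]
    have := Int.lt_floor_add_one α
    linarith
  have h4 : 0 < th α 1 := lt_of_le_of_ne h2 (Ne.symm h1)
  refine ⟨?_, ?_, ?_, ?_, ?_, ?_⟩
  · rw [th0]; nlinarith
  · rw [th0, abs_of_pos h4, abs_of_neg (by norm_num : (-1:ℝ) < 0)]; linarith
  · rw [P0, P1, Q0, Q1]; ring
  · rw [Q0]
  · rw [Q1]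
  · rw [Q0, Q1]; norm_num

include hα in
lemma inv_step (n : ℕ) (h : Inv (α := α) n) : Inv (α := α) (n+1) := by
  obtain ⟨hsign, hlt, hdet, hq0, hq1, hqm⟩ := h
  set u := th α n
  set v := th α (n+1)
  have hv : v ≠ 0 := by
    intro hv0
    rw [hv0, mul_zero] at hsign
    exact lt_irrefl 0 hsign
  have hvpos : 0 < |v| := abs_pos.2 hv
  have hBle : (B α n : ℝ) * |v| ≤ |u| := by
    rw [B_eq]
    have := Int.floor_le (|u| / |v|)
    calc (⌊|u| / |v|⌋ : ℝ) * |v| ≤ (|u| / |v|) * |v| := by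
          apply mul_le_mul_of_nonneg_right this (le_of_lt hvpos)
      _ = |u| := div_mul_cancel₀ _ (ne_of_gt hvpos)
  have hBgt : |u| < ((B α n : ℝ) + 1) * |v| := by
    rw [B_eq]
    have := Int.lt_floor_add_one (|u| / |v|)
    calc |u| = (|u| / |v|) * |v| := (div_mul_cancel₀ _ (ne_of_gt hvpos)).symm
      _ < (⌊|u| / |v|⌋ + 1) * |v| := by
          apply mul_lt_mul_of_pos_right this hvpos
  have hB1 : 1 ≤ B α n := by
    rw [B_eq]
    rw [Int.le_floor]
    push_cast
    rw [le_div_iff₀ hvpos]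
    linarith
  have hQ2 : 1 ≤ Q α (n+2) := by
    rw [Q_rec]
    nlinarith [hB1, hq0, hq1]
  have hw : th α (n+2) ≠ 0 := th_ne hα (n+2) hQ2
  have hrec := th_rec α n
  set w := th α (n+2)
  -- sign analysis
  have key : v * w < 0 ∧ |w| < |v| ∧ |w| ≤ |u| - (B α n : ℝ) * |v| := by
    rcases lt_or_gt_of_ne hv with hvneg | hvpos'
    · -- v < 0, so u > 0, u = |u|, v = -|v|
      have hupos : 0 < u := by nlinarith
      have hau : |u| = u := abs_of_pos hupos
      have hav : |v| = -v := abs_of_neg hvneg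
      have hwpos : 0 < w := by
        rcases lt_or_gt_of_ne hw with h' | h'
        · exfalso; nlinarith [hrec]
        · exact h'
      have haw : |w| = w := abs_of_pos hwpos
      refine ⟨by nlinarith, by nlinarith [hrec], by nlinarith [hrec]⟩
    · -- v > 0, u < 0
      have huneg : u < 0 := by nlinarith
      have hau : |u| = -u := abs_of_neg huneg
      have hav : |v| = v := abs_of_pos hvpos'
      have hwneg : w < 0 := by
        rcases lt_or_gt_of_ne hw with h' | h'
        · exact h'
        · exfalso; nlinarith [hrec]
      have haw : |w| = -w := abs_of_neg hwneg
      refine ⟨by nlinarith, by nlinarith [hrec], by nlinarith [hrec]⟩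
  refine ⟨key.1, key.2.1, ?_, ?_, hQ2, ?_⟩
  · have h : P α (n+2) * Q α (n+1) - P α (n+1) * Q α (n+2)
        = -(P α (n+1) * Q α n - P α n * Q α (n+1)) := by
      rw [P_rec, Q_rec]; ring
    rw [h, neg_sq]; exact hdet
  · omega
  · rw [Q_rec]; nlinarith [hB1, hq0, hq1]

include hα in
lemma inv_all (n : ℕ) : Inv (α := α) n := by
  induction n with
  | zero => exact inv_zero hα
  | succ k ih => exact inv_step hα k ih

include hα in
lemma B_pos (n : ℕ) : 1 ≤ B α n := by
  obtain ⟨hsign, hlt, _, _, hq1, _⟩ := inv_all hα n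
  have hv : th α (n+1) ≠ 0 := by
    intro hv0; rw [hv0, mul_zero] at hsign; exact lt_irrefl 0 hsign
  have hvpos : 0 < |th α (n+1)| := abs_pos.2 hv
  rw [B_eq, Int.le_floor]
  push_cast
  rw [le_div_iff₀ hvpos]
  linarith

include hα in
lemma Q_pos (n : ℕ) : 1 ≤ Q α (n+1) := (inv_all hα n).2.2.2.2.1

include hα in
lemma B_mul_th_le (n : ℕ) : (B α n : ℝ) * |th α (n+1)| ≤ |th α n| := by
  obtain ⟨hsign, hlt, _, _, _, _⟩ := inv_all hα n
  have hv : th α (n+1) ≠ 0 := by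
    intro hv0; rw [hv0, mul_zero] at hsign; exact lt_irrefl 0 hsign
  have hvpos : 0 < |th α (n+1)| := abs_pos.2 hv
  rw [B_eq]
  calc (⌊|th α n| / |th α (n+1)|⌋ : ℝ) * |th α (n+1)|
      ≤ (|th α n| / |th α (n+1)|) * |th α (n+1)| :=
        mul_le_mul_of_nonneg_right (Int.floor_le _) (le_of_lt hvpos)
    _ = |th α n| := div_mul_cancel₀ _ (ne_of_gt hvpos)

include hα in
lemma th_abs_anti (n : ℕ) : |th α (n+1)| < |th α n| := (inv_all hα n).2.1

include hα in
lemma th_abs_half (n : ℕ) : |th α (n+2)| ≤ |th α n| / 2 := by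
  have h1 : |th α (n+2)| ≤ |th α n| - (B α n : ℝ) * |th α (n+1)| := by
    -- reprove from step data: |w| = |u| - B|v| in both cases; we derive ≤ via th_rec
    have hrec := th_rec α n
    obtain ⟨hsign, hlt, _, _, hq1, _⟩ := inv_all hα n
    obtain ⟨hsign2, hlt2, _, _, _, _⟩ := inv_all hα (n+1)
    -- u and w = B v + u : we use sign info: v*w < 0 means w, v opposite; u, v opposite
    set u := th α n; set v := th α (n+1); set w := th α (n+2)
    rcases lt_or_ge v 0 with hv | hv
    · have hupos : 0 < u := by nlinarith
      have hwpos : 0 < w := by nlinarith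
      rw [abs_of_pos hwpos, abs_of_pos hupos, abs_of_neg hv]
      nlinarith [hrec]
    · have hv' : 0 < v := by
        rcases lt_or_eq_of_le hv with h | h
        · exact h
        · exfalso; rw [← h] at hsign; simp at hsign
      have huneg : u < 0 := by nlinarith
      have hwneg : w < 0 := by nlinarith
      rw [abs_of_neg hwneg, abs_of_neg huneg, abs_of_pos hv']
      nlinarith [hrec]
  have h2 := B_pos hα n
  have h3 := th_abs_anti hα (n+1)
  have h4 : (1:ℝ) ≤ (B α n : ℝ) := by exact_mod_cast h2
  have h5 : |th α (n+1)| ≥ 0 := abs_nonneg _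
  nlinarith [h1, h3, h4, h5]

include hα in
lemma th_tendsto : Tendsto (fun n => |th α n|) atTop (𝓝 0) := by
  have hanti : Antitone fun n => |th α n| :=
    antitone_nat_of_succ_le fun n => le_of_lt (th_abs_anti hα n)
  have hbdd : BddBelow (Set.range fun n => |th α n|) :=
    ⟨0, fun x ⟨n, hn⟩ => hn ▸ abs_nonneg _⟩
  have hconv : Tendsto (fun n => |th α n|) atTop (𝓝 (⨅ n, |th α n|)) :=
    tendsto_atTop_ciInf hanti hbdd
  have hL0 : 0 ≤ ⨅ n, |th α n| := le_ciInf fun n => abs_nonneg _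
  have h2 : Tendsto (fun n => |th α (n+2)|) atTop (𝓝 (⨅ n, |th α n|)) :=
    hconv.comp (tendsto_add_atTop_nat 2)
  have h3 : Tendsto (fun n => |th α n| / 2) atTop (𝓝 ((⨅ n, |th α n|) / 2)) :=
    hconv.div_const 2
  have hle : (⨅ n, |th α n|) ≤ (⨅ n, |th α n|) / 2 :=
    le_of_tendsto_of_tendsto' h2 h3 fun n => th_abs_half hα n
  have : (⨅ n, |th α n|) = 0 := by linarith
  rwa [this] at hconv

open Filter Topology

variable (α) in
/-- block lengths -/
def A' (n : ℕ) : ℕ := (B α n).toNat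

variable (α) in
/-- the characterizing sequence -/
def aseq (m : ℕ) : ℕ := (idx (A' α) m).2 * (Q α ((idx (A' α) m).1 + 1)).toNat

include hα in
lemma hA' : ∀ n, 1 ≤ A' α n := fun n => by
  have := B_pos hα n; unfold A'; omega

include hα in
lemma Q_toNat (n : ℕ) : ((Q α (n+1)).toNat : ℤ) = Q α (n+1) :=
  Int.toNat_of_nonneg (by linarith [Q_pos hα n])

include hα in
lemma aseq_pos (m : ℕ) : 0 < aseq α m := by
  have h1 := (idx_j_bounds (hA' hα) m).1
  have h2 := Q_pos hα ((idx (A' α) m).1)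
  have h3 := Q_toNat hα ((idx (A' α) m).1)
  unfold aseq
  have : 0 < (Q α ((idx (A' α) m).1 + 1)).toNat := by omega
  positivity

include hα in
lemma aseq_cast (m : ℕ) :
    ((aseq α m : ℕ) : ℝ) =
      ((idx (A' α) m).2 : ℝ) * ((Q α ((idx (A' α) m).1 + 1) : ℤ) : ℝ) := by
  unfold aseq
  rw [Nat.cast_mul]
  congr 1
  exact_mod_cast congrArg (fun z : ℤ => (z : ℝ)) (Q_toNat hα ((idx (A' α) m).1))

include hα in
lemma forward_CharSeq.core (k l : ℤ) :
    Tendsto (fun m => nn ((aseq α m : ℕ) * ((k : ℝ) * α + l))) atTop (𝓝 0) := by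
  have hbound : ∀ m, nn ((aseq α m : ℕ) * ((k : ℝ) * α + l))
      ≤ |(k : ℝ)| * |th α ((idx (A' α) m).1)| := by
    intro m
    set n := (idx (A' α) m).1 with hn
    set j := (idx (A' α) m).2 with hj
    have hcast := aseq_cast hα m
    -- aseq * (kα + l) = j*k*th(n+1) + integer
    have key : ((aseq α m : ℕ) : ℝ) * ((k : ℝ) * α + l)
        = (j : ℝ) * k * th α (n+1) + ((j * (Q α (n+1)) * l + j * k * (P α (n+1)) : ℤ) : ℝ) := by
      rw [hcast]
      rw [th]
      push_cast
      ring
    rw [key, nn_add_int]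
    have h1 : nn ((j : ℝ) * k * th α (n+1)) ≤ |(j : ℝ) * k * th α (n+1)| := nn_le_abs _
    have h2 : |(j : ℝ) * k * th α (n+1)| = (j : ℝ) * |(k:ℝ)| * |th α (n+1)| := by
      rw [abs_mul, abs_mul]
      congr 1
      · congr 1
        exact abs_of_nonneg (by positivity)
    have hjB : (j : ℝ) ≤ (B α n : ℝ) := by
      have := (idx_j_bounds (hA' hα) m).2
      have hB := B_pos hα n
      have : (j : ℤ) ≤ B α n := by
        have h4 : j ≤ A' α n := (idx_j_bounds (hA' hα) m).2
        unfold A' at h4; omega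
      exact_mod_cast this
    have hBth := B_mul_th_le hα n
    have hth1 : |th α (n+1)| ≥ 0 := abs_nonneg _
    calc nn ((j : ℝ) * k * th α (n+1)) ≤ (j : ℝ) * |(k:ℝ)| * |th α (n+1)| := h2 ▸ h1
      _ = |(k:ℝ)| * ((j : ℝ) * |th α (n+1)|) := by ring
      _ ≤ |(k:ℝ)| * ((B α n : ℝ) * |th α (n+1)|) :=
          mul_le_mul_of_nonneg_left (mul_le_mul_of_nonneg_right hjB hth1) (abs_nonneg _)
      _ ≤ |(k : ℝ)| * |th α n| := mul_le_mul_of_nonneg_left hBth (abs_nonneg _)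
  have hg : Tendsto (fun m => |(k : ℝ)| * |th α ((idx (A' α) m).1)|) atTop (𝓝 0) := by
    have h1 : Tendsto (fun n => |(k : ℝ)| * |th α n|) atTop (𝓝 (|(k:ℝ)| * 0)) :=
      (th_tendsto hα).const_mul _
    rw [mul_zero] at h1
    exact h1.comp (idx_fst_tendsto (hA' hα))
  exact tendsto_of_tendsto_of_tendsto_of_le_of_le tendsto_const_nhds hg
    (fun m => nn_nonneg _) hbound

include hα in
lemma extract {β : ℝ} (H : Tendsto (fun m => nn ((aseq α m : ℕ) * β)) atTop (𝓝 0))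
    {ε : ℝ} (hε : 0 < ε) :
    ∃ N, ∀ n, N ≤ n → ∀ j : ℕ, 1 ≤ j → j ≤ A' α n →
      nn ((j : ℝ) * (((Q α (n+1) : ℤ) : ℝ) * β)) < ε := by
  obtain ⟨M, hM⟩ := (Metric.tendsto_atTop.1 H) ε hε
  refine ⟨(idx (A' α) M).1 + 1, fun n hn j hj1 hj2 => ?_⟩
  obtain ⟨m, hm⟩ := idx_reach (hA' hα) n j hj1 hj2
  have hmM : M ≤ m := by
    apply idx_late (A := A' α)
    rw [hm]
    omega
  have := hM m hmM
  rw [Real.dist_eq, sub_zero, abs_of_nonneg (nn_nonneg _)] at this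
  have hc := aseq_cast hα m
  rw [hm] at hc
  simp only at hc
  rw [← mul_assoc, ← hc]
  exact this

include hα in
lemma wrap {β : ℝ} {n : ℕ} {ε : ℝ} (hε1 : 0 < ε) (hε2 : ε ≤ 1/8)
    (hj : ∀ j : ℕ, 1 ≤ j → j ≤ A' α n →
      nn ((j : ℝ) * (((Q α (n+1) : ℤ) : ℝ) * β)) < ε) :
    |(B α n : ℝ) * (((Q α (n+1) : ℤ) : ℝ) * β - round (((Q α (n+1) : ℤ) : ℝ) * β))| < ε := by
  have hδ1 : |((Q α (n+1) : ℤ) : ℝ) * β - round (((Q α (n+1) : ℤ) : ℝ) * β)| < ε := by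
    have h1 := hj 1 le_rfl (hA' hα n)
    rw [nn] at h1
    simpa using h1
  have key : ∀ j : ℕ, 1 ≤ j → j ≤ A' α n →
      |(j : ℝ) * (((Q α (n+1) : ℤ) : ℝ) * β - round (((Q α (n+1) : ℤ) : ℝ) * β))| < ε := by
    intro j
    induction j with
    | zero => exact fun h _ => absurd h (by omega)
    | succ i ih =>
      intro _ hle
      rcases Nat.eq_zero_or_pos i with hi | hi
      · subst hi; simpa using hδ1
      · have hprev := ih hi (by omega)
        set y := ((Q α (n+1) : ℤ) : ℝ) * β with hy
        set δ := y - round y with hd2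
        have habs : |((i+1 : ℕ) : ℝ) * δ| ≤ |(i : ℝ) * δ| + |δ| := by
          push_cast
          rw [add_mul, one_mul]
          exact abs_add_le _ _
        have hlt : |((i+1 : ℕ) : ℝ) * δ| < 1/2 := lt_of_le_of_lt habs (by linarith)
        have hshift : ((i+1 : ℕ) : ℝ) * δ
            = ((i+1 : ℕ) : ℝ) * y + ((-((i:ℤ)+1) * round y : ℤ) : ℝ) := by
          rw [hd2]
          push_cast
          ring
        have hnn : nn (((i+1 : ℕ) : ℝ) * δ) < ε := by
          rw [hshift, nn_add_int]
          exact hj (i+1) (by omega) hle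
        rwa [nn_eq_abs hlt] at hnn
  have hfin := key (A' α n) (hA' hα n) le_rfl
  have hcast : ((A' α n : ℕ) : ℝ) = ((B α n : ℤ) : ℝ) := by
    have hB := B_pos hα n
    have h0 : ((B α n).toNat : ℤ) = B α n := Int.toNat_of_nonneg (by omega)
    unfold A'
    exact_mod_cast congrArg (fun z : ℤ => (z : ℝ)) h0
  rwa [hcast] at hfin

include hα in
theorem core :
    ∃ a : ℕ → ℕ, (∀ m, 0 < a m) ∧ ∀ β : ℝ,
      Tendsto (fun m => nn ((a m : ℕ) * β)) atTop (𝓝 0) ↔ ∃ k l : ℤ, β = k * α + l := by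
  refine ⟨aseq α, aseq_pos hα, fun β => ⟨fun H => ?_, fun ⟨k, l, hkl⟩ => by
    subst hkl; exact forward_CharSeq.core hα k l⟩⟩
  -- the converse
  set r : ℕ → ℤ := fun n => round (((Q α n : ℤ) : ℝ) * β) with hr
  set δ : ℕ → ℝ := fun n => ((Q α n : ℤ) : ℝ) * β - r n with hδdef
  obtain ⟨N, hN⟩ := extract hα H (by norm_num : (0:ℝ) < 1/8)
  have hδ' : ∀ n, N ≤ n → |δ (n+1)| < 1/8 := by
    intro n hn
    have h1 := hN n hn 1 le_rfl (hA' hα n)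
    rw [nn] at h1
    simp only [hδdef, hr]
    simpa using h1
  have hwrap : ∀ n, N ≤ n → |(B α n : ℝ) * δ (n+1)| < 1/8 :=
    fun n hn => wrap hα (by norm_num) le_rfl (hN n hn)
  -- the recurrence for r
  have hrec : ∀ n, N ≤ n → r (n+3) = B α (n+1) * r (n+2) + r (n+1) := by
    intro n hn
    have h1 : |δ (n+1)| < 1/8 := hδ' n hn
    have h2 : |δ (n+3)| < 1/8 := hδ' (n+2) (by omega)
    have h3 : |(B α (n+1) : ℝ) * δ (n+2)| < 1/8 := hwrap (n+1) (by omega)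
    set E : ℤ := r (n+3) - B α (n+1) * r (n+2) - r (n+1) with hE
    have hQrec : ((Q α (n+3) : ℤ) : ℝ) = (B α (n+1) : ℝ) * ((Q α (n+2) : ℤ) : ℝ) + ((Q α (n+1) : ℤ) : ℝ) := by
      have := Q_rec α (n+1)
      exact_mod_cast this
    have hEreal : ((E : ℤ) : ℝ) = -δ (n+3) + (B α (n+1) : ℝ) * δ (n+2) + δ (n+1) := by
      simp only [hE, hδdef, hr]
      push_cast
      rw [hQrec]
      ring
    have hEsmall : |((E : ℤ) : ℝ)| < 1 := by
      rw [hEreal]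
      calc |(-δ (n+3) + (B α (n+1) : ℝ) * δ (n+2) + δ (n+1))|
          ≤ |δ (n+3)| + |(B α (n+1) : ℝ) * δ (n+2)| + |δ (n+1)| := by
            have := abs_add_le (-δ (n+3) + (B α (n+1) : ℝ) * δ (n+2)) (δ (n+1))
            have h5 := abs_add_le (-δ (n+3)) ((B α (n+1) : ℝ) * δ (n+2))
            rw [abs_neg] at h5
            linarith
        _ < 1 := by linarith
    have hE0 : E = 0 := by
      by_contra hne
      have h6 : 1 ≤ |E| := Int.one_le_abs hne
      have h7 : (1:ℝ) ≤ |((E : ℤ) : ℝ)| := by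
        rw [← Int.cast_abs]
        exact_mod_cast h6
      linarith
    rw [hE] at hE0
    linarith [hE0]
  -- solve for K, L
  set d : ℤ := P α (N+2) * Q α (N+1) - P α (N+1) * Q α (N+2) with hd
  have hdsq : d^2 = 1 := (inv_all hα (N+1)).2.2.1
  set K : ℤ := d * (r (N+2) * Q α (N+1) - r (N+1) * Q α (N+2)) with hK
  set L : ℤ := d * (r (N+1) * P α (N+2) - r (N+2) * P α (N+1)) with hL
  have base1 : K * P α (N+1) + L * Q α (N+1) = r (N+1) := by
    rw [hK, hL, hd] at *
    linear_combination (r (N+1)) * hdsq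
  have base2 : K * P α (N+2) + L * Q α (N+2) = r (N+2) := by
    rw [hK, hL, hd] at *
    linear_combination (r (N+2)) * hdsq
  have hlin : ∀ p, K * P α (N+1+p) + L * Q α (N+1+p) = r (N+1+p) := by
    have main : ∀ p, (K * P α (N+1+p) + L * Q α (N+1+p) = r (N+1+p)) ∧
        (K * P α (N+1+p+1) + L * Q α (N+1+p+1) = r (N+1+p+1)) := by
      intro p
      induction p with
      | zero => exact ⟨base1, base2⟩
      | succ q ih =>
        refine ⟨ih.2, ?_⟩
        have hrec2 : r ((N+1+q)+2) = B α (N+1+q) * r ((N+1+q)+1) + r (N+1+q) := by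
          have := hrec (N+q) (by omega)
          have e1 : N+q+3 = (N+1+q)+2 := by omega
          have e2 : N+q+2 = (N+1+q)+1 := by omega
          have e3 : N+q+1 = N+1+q := by omega
          rwa [e1, e2, e3] at this
        have hP := P_rec α (N+1+q)
        have hQ := Q_rec α (N+1+q)
        have e4 : N+1+(q+1)+1 = (N+1+q)+2 := by omega
        have e5 : N+1+(q+1) = (N+1+q)+1 := by omega
        rw [e4, hP, hQ, hrec2]
        linear_combination (B α (N+1+q)) * ih.2 + ih.1
    exact fun p => (main p).1
  -- conclude β = K α + L
  refine ⟨K, L, ?_⟩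
  by_contra hne
  have hc : 0 < |β - ((K : ℝ) * α + L)| := abs_pos.2 (sub_ne_zero.2 hne)
  set c := |β - ((K : ℝ) * α + L)| with hcdef
  -- choose large n
  have hth := th_tendsto hα
  obtain ⟨N₂, hN₂⟩ := (Metric.tendsto_atTop.1 hth) (c / (2 * (|(K:ℝ)| + 1)))
    (by positivity)
  obtain ⟨N₃, hN₃⟩ := extract hα H (half_pos hc)
  set p := N₂ + N₃ + N with hp
  set n := N + 1 + p with hn
  have hδn : |δ n| < c / 2 := by
    have h1 := hN₃ (N + p) (by omega) 1 le_rfl (hA' hα _)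
    rw [nn] at h1
    have e : N + p + 1 = n := by omega
    rw [e] at h1
    simp only [hδdef, hr]
    simpa using h1
  have hthn : |(K : ℝ)| * |th α n| < c / 2 := by
    have h1 := hN₂ n (by omega)
    rw [Real.dist_eq, sub_zero, abs_of_nonneg (abs_nonneg _)] at h1
    have h2 : |(K:ℝ)| ≤ |(K:ℝ)| + 1 := by linarith
    have h3 : 0 ≤ |th α n| := abs_nonneg _
    have h4 : (0:ℝ) < |(K:ℝ)| + 1 := by positivity
    calc |(K : ℝ)| * |th α n| ≤ (|(K:ℝ)| + 1) * |th α n| := by nlinarith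
      _ < (|(K:ℝ)| + 1) * (c / (2 * (|(K:ℝ)| + 1))) := by nlinarith
      _ = c / 2 := by field_simp
  have hlinn : K * P α n + L * Q α n = r n := hlin p
  have hkey : ((Q α n : ℤ) : ℝ) * (β - ((K:ℝ) * α + L)) = δ n - (K : ℝ) * th α n := by
    have hc2 : ((r n : ℤ) : ℝ) = (K : ℝ) * ((P α n : ℤ) : ℝ) + (L : ℝ) * ((Q α n : ℤ) : ℝ) := by
      exact_mod_cast hlinn.symm
    simp only [hδdef]
    rw [th, hc2]
    ring
  have hQn : (1 : ℝ) ≤ ((Q α n : ℤ) : ℝ) := by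
    have := Q_pos hα (N + p)
    have e : N + p + 1 = n := by omega
    rw [e] at this
    exact_mod_cast this
  have habs : ((Q α n : ℤ) : ℝ) * c ≤ |δ n| + |(K : ℝ)| * |th α n| := by
    rw [hcdef]
    calc ((Q α n : ℤ) : ℝ) * |β - ((K : ℝ) * α + L)|
        = |((Q α n : ℤ) : ℝ) * (β - ((K:ℝ) * α + L))| := by
          rw [abs_mul, abs_of_nonneg (by linarith : (0:ℝ) ≤ ((Q α n : ℤ) : ℝ))]
      _ = |δ n - (K : ℝ) * th α n| := by rw [hkey]
      _ ≤ |δ n| + |(K : ℝ) * th α n| := abs_sub _ _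
      _ = |δ n| + |(K : ℝ)| * |th α n| := by rw [abs_mul]
  nlinarith [hδn, hthn, habs, hQn, hc]
lemma exp_nat_mul (x : ℝ) : ∀ n : ℕ, Circle.exp ((n : ℝ) * x) = Circle.exp x ^ n := by
  intro n
  induction n with
  | zero => simp
  | succ k ih =>
    push_cast
    rw [add_mul, one_mul, Circle.exp_add, ih, pow_succ]

lemma exp_int_mul (x : ℝ) (k : ℤ) : Circle.exp ((k : ℝ) * x) = Circle.exp x ^ k := by
  cases k with
  | ofNat n =>
    have := exp_nat_mul x n
    rw [Int.ofNat_eq_coe, zpow_natCast]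
    push_cast
    exact this
  | negSucc n =>
    have h1 := exp_nat_mul x (n+1)
    rw [Int.cast_negSucc, zpow_negSucc, neg_mul, Circle.exp_neg, ← h1]

lemma norm_addCircle (x : ℝ) : ‖((x : ℝ) : AddCircle (1:ℝ))‖ = nn x := by
  rw [AddCircle.norm_eq]
  simp [nn]

lemma bridge (t : ℝ) (a : ℕ → ℕ) :
    Tendsto (fun m => Circle.exp (2 * Real.pi * t) ^ a m) atTop (𝓝 1) ↔
      Tendsto (fun m => nn ((a m : ℕ) * t)) atTop (𝓝 0) := by
  have hfun : ∀ m, Circle.exp (2 * Real.pi * t) ^ a m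
      = AddCircle.toCircle ((((a m : ℕ) * t : ℝ)) : AddCircle (1:ℝ)) := by
    intro m
    rw [AddCircle.toCircle_apply_mk, ← exp_nat_mul]
    congr 1
    rw [div_one]
    ring
  have hemb : Topology.IsEmbedding (AddCircle.homeomorphCircle (one_ne_zero : (1:ℝ) ≠ 0)) :=
    (AddCircle.homeomorphCircle one_ne_zero).isEmbedding
  have hg0 : (AddCircle.homeomorphCircle (one_ne_zero : (1:ℝ) ≠ 0)) (0 : AddCircle (1:ℝ)) = 1 := by
    rw [AddCircle.homeomorphCircle_apply]
    exact AddCircle.toCircle_zero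
  have hfe : (fun m => Circle.exp (2 * Real.pi * t) ^ a m)
      = (AddCircle.homeomorphCircle (one_ne_zero : (1:ℝ) ≠ 0)) ∘
          (fun m => ((((a m : ℕ) * t : ℝ)) : AddCircle (1:ℝ))) := by
    funext m
    simp only [Function.comp_apply]
    rw [AddCircle.homeomorphCircle_apply]
    exact hfun m
  rw [hfe, ← hg0, ← hemb.tendsto_nhds_iff, tendsto_zero_iff_norm_tendsto_zero]
  simp only [norm_addCircle]

end CharSeq

/-- For `z ∈ 𝕊` of infinite order there is a sequence `(a_n)` of positive integers such
that for `v ∈ 𝕊`: `v^{a_n} → 1` iff `v ∈ ⟨z⟩`. -/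
theorem exists_characterizing_sequence (z : Circle) (hz : ∀ n : ℕ, 0 < n → z ^ n ≠ 1) :
    ∃ a : ℕ → ℕ, (∀ n : ℕ, 0 < a n) ∧
      ∀ v : Circle,
        Tendsto (fun n : ℕ => v ^ a n) atTop (𝓝 (1 : Circle)) ↔ v ∈ Subgroup.zpowers z := by
  have hπ : (2 * Real.pi) ≠ 0 := by positivity
  set α : ℝ := Complex.arg z / (2 * Real.pi) with hαdef
  have hz_eq : z = Circle.exp (2 * Real.pi * α) := by
    rw [hαdef]
    rw [show 2 * Real.pi * (Complex.arg z / (2 * Real.pi)) = Complex.arg z from by field_simp]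
    exact (Circle.exp_arg z).symm
  have hzpow : ∀ (n : ℕ) (m : ℤ), ((n:ℝ) * α = m) → z ^ n = 1 := by
    intro n m hm
    rw [hz_eq, ← CharSeq.exp_nat_mul]
    rw [show (n : ℝ) * (2 * Real.pi * α) = ((n:ℝ) * α) * (2 * Real.pi) from by ring, hm]
    exact Circle.exp_int_mul_two_pi m
  have hα : ∀ p q : ℤ, q ≠ 0 → (q : ℝ) * α ≠ p := by
    intro p q hq hEq
    rcases lt_or_gt_of_ne hq with hq' | hq'
    · refine hz ((-q).toNat) (by omega) (hzpow _ (-p) ?_)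
      have h1 : (((-q).toNat : ℕ) : ℝ) = -(q : ℝ) := by
        exact_mod_cast congrArg (fun w : ℤ => (w:ℝ))
          (Int.toNat_of_nonneg (show (0:ℤ) ≤ -q by omega))
      rw [h1]
      push_cast
      linarith [hEq]
    · refine hz (q.toNat) (by omega) (hzpow _ p ?_)
      have h1 : ((q.toNat : ℕ) : ℝ) = (q : ℝ) := by
        exact_mod_cast congrArg (fun w : ℤ => (w:ℝ)) (Int.toNat_of_nonneg (by omega))
      rw [h1]
      exact hEq
  obtain ⟨a, hpos, hiff⟩ := CharSeq.core hα
  refine ⟨a, hpos, fun v => ?_⟩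
  set β : ℝ := Complex.arg v / (2 * Real.pi) with hβdef
  have hv_eq : v = Circle.exp (2 * Real.pi * β) := by
    rw [hβdef]
    rw [show 2 * Real.pi * (Complex.arg v / (2 * Real.pi)) = Complex.arg v from by field_simp]
    exact (Circle.exp_arg v).symm
  have hmem : v ∈ Subgroup.zpowers z ↔ ∃ k l : ℤ, β = k * α + l := by
    rw [Subgroup.mem_zpowers_iff]
    constructor
    · rintro ⟨k, hk⟩
      have h1 : Circle.exp (2 * Real.pi * β) = Circle.exp ((k:ℝ) * (2 * Real.pi * α)) := by
        rw [CharSeq.exp_int_mul, ← hz_eq, hk, hv_eq]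
      have h2 : Circle.exp (2 * Real.pi * β - (k:ℝ) * (2 * Real.pi * α)) = 1 := by
        rw [Circle.exp_sub, h1, div_self']
      rw [Circle.exp_eq_one] at h2
      obtain ⟨n, hn⟩ := h2
      refine ⟨k, n, ?_⟩
      have h3 : 2 * Real.pi * (β - ((k:ℝ) * α + (n:ℝ))) = 0 := by
        rw [show 2 * Real.pi * (β - ((k:ℝ) * α + (n:ℝ)))
          = (2 * Real.pi * β - (k:ℝ) * (2 * Real.pi * α)) - (n:ℝ) * (2 * Real.pi) from by ring,
          hn]
        ring
      have h4 := mul_eq_zero.1 h3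
      rcases h4 with h4 | h4
      · exact absurd h4 hπ
      · linarith [sub_eq_zero.1 h4]
    · rintro ⟨k, l, hkl⟩
      refine ⟨k, ?_⟩
      rw [hv_eq, hkl, hz_eq, ← CharSeq.exp_int_mul]
      rw [show 2 * Real.pi * ((k:ℝ) * α + (l:ℝ))
        = (k:ℝ) * (2 * Real.pi * α) + (l:ℝ) * (2 * Real.pi) from by ring]
      rw [Circle.exp_add, Circle.exp_int_mul_two_pi, mul_one]
  rw [hmem, ← hiff β, hv_eq]
  exact CharSeq.bridge β a

end
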